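/- Let I₁ > I₂ > I₃ > 0, M₀ ≠ 0, x_e = (0,0,M₀), and L(x) = (½‖x‖² − M₀²/2)² + ½‖x‖² − (I₃/2)(x₁²/I₁ + x₂²/I₂ + x₃²/I₃). Then L(x_e) = 0, ∇L(x_e) = 0, and the Hessian of L at x_e is the diagonal matrix diag(1 − I₃/I₁, 1 − I₃/I₂, 2M₀²), which is positive definite; hence x_e is a strict local minimum of L. -/

import Mathlib

local notation "E3" => EuclideanSpace ℝ (Fin 3)

lemma normsq3 (x : E3) : ‖x‖^2 = x 0^2 + x 1^2 + x 2^2 := by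
  rw [← real_inner_self_eq_norm_sq]
  simp only [PiLp.inner_apply, Fin.sum_univ_three, RCLike.inner_apply, conj_trivial]
  ring

lemma hp3 (i : Fin 3) (x : E3) :
    HasFDerivAt (fun y : E3 => y i) ((EuclideanSpace.proj i : E3 →L[ℝ] ℝ)) x :=
  ((EuclideanSpace.proj i : E3 →L[ℝ] ℝ)).hasFDerivAt

lemma hasD3 (I1 I2 I3 M0 : ℝ) (h1 : I1 ≠ 0) (h2 : I2 ≠ 0) (h3 : I3 ≠ 0) (x : E3) :
    HasFDerivAt (fun x : E3 =>
      ((1/2) * ‖x‖ ^ 2 - M0 ^ 2 / 2) ^ 2 + (1/2) * ‖x‖ ^ 2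
        - (I3/2) * ((x 0) ^ 2 / I1 + (x 1) ^ 2 / I2 + (x 2) ^ 2 / I3))
      ((‖x‖^2 - M0^2) • innerSL ℝ x + innerSL ℝ x
        - ((I3/I1 * x 0) • (EuclideanSpace.proj 0 : E3 →L[ℝ] ℝ)
           + (I3/I2 * x 1) • (EuclideanSpace.proj 1 : E3 →L[ℝ] ℝ)
           + (x 2) • (EuclideanSpace.proj 2 : E3 →L[ℝ] ℝ))) x := by
  have hn : HasFDerivAt (fun y : E3 => ‖y‖^2) ((2:ℕ) • innerSL ℝ x) x :=
    (hasStrictFDerivAt_norm_sq x).hasFDerivAt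
  have hu : HasFDerivAt (fun y : E3 => (1/2) * ‖y‖^2 - M0^2/2)
      ((1/2:ℝ) • ((2:ℕ) • innerSL ℝ x)) x := (hn.const_mul (1/2)).sub_const _
  have hsq := hu.mul hu
  have hq : ∀ i : Fin 3, ∀ c : ℝ, HasFDerivAt (fun y : E3 => (y i) ^ 2 / c)
      (c⁻¹ • ((x i • (EuclideanSpace.proj i : E3 →L[ℝ] ℝ))
        + (x i • (EuclideanSpace.proj i : E3 →L[ℝ] ℝ)))) x := by
    intro i c
    have h := ((hp3 i x).mul (hp3 i x)).mul_const c⁻¹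
    have hfun : (fun y : E3 => y i * y i * c⁻¹) = (fun y : E3 => (y i) ^ 2 / c) := by
      funext y; ring
    rw [← hfun]
    exact h
  have h := (hsq.add (hn.const_mul (1/2))).sub
    ((((hq 0 I1).add (hq 1 I2)).add (hq 2 I3)).const_mul (I3/2))
  have hfun : (fun y : E3 =>
      ((1/2) * ‖y‖ ^ 2 - M0 ^ 2 / 2) * ((1/2) * ‖y‖ ^ 2 - M0 ^ 2 / 2) + (1/2) * ‖y‖ ^ 2
        - (I3/2) * ((y 0) ^ 2 / I1 + (y 1) ^ 2 / I2 + (y 2) ^ 2 / I3))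
      = (fun y : E3 =>
      ((1/2) * ‖y‖ ^ 2 - M0 ^ 2 / 2) ^ 2 + (1/2) * ‖y‖ ^ 2
        - (I3/2) * ((y 0) ^ 2 / I1 + (y 1) ^ 2 / I2 + (y 2) ^ 2 / I3)) := by
    funext y; ring
  rw [← hfun]
  refine h.congr_fderiv ?_
  ext v
  simp [PiLp.proj_apply]
  field_simp
  ring

set_option maxHeartbeats 1000000 in
/-- For `I₁ > I₂ > I₃ > 0`, `M₀ ≠ 0`, `x_e = (0,0,M₀)` and
`L(x) = (½‖x‖² − M₀²/2)² + ½‖x‖² − (I₃/2)(x₁²/I₁ + x₂²/I₂ + x₃²/I₃)`, one has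
`L(x_e) = 0`, `∇L(x_e) = 0`, the Hessian of `L` at `x_e` is
`diag(1 − I₃/I₁, 1 − I₃/I₂, 2M₀²)` which is positive definite, and `x_e` is a
strict local minimum of `L`. -/
theorem lyapunov_rigid_body_axis3
    (I1 I2 I3 M0 : ℝ) (h12 : I1 > I2) (h23 : I2 > I3) (h3 : I3 > 0) (hM0 : M0 ≠ 0) :
    ∀ L : EuclideanSpace ℝ (Fin 3) → ℝ,
      (L = fun x => ((1/2) * ‖x‖ ^ 2 - M0 ^ 2 / 2) ^ 2 + (1/2) * ‖x‖ ^ 2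
          - (I3/2) * ((x 0) ^ 2 / I1 + (x 1) ^ 2 / I2 + (x 2) ^ 2 / I3)) →
      ∀ xe : EuclideanSpace ℝ (Fin 3),
      xe = (WithLp.equiv 2 (Fin 3 → ℝ)).symm ![0, 0, M0] →
      L xe = 0
      ∧ gradient L xe = 0
      ∧ (∀ i j : Fin 3,
          iteratedFDeriv ℝ 2 L xe ![EuclideanSpace.single i 1, EuclideanSpace.single j 1]
            = Matrix.diagonal ![1 - I3/I1, 1 - I3/I2, 2 * M0 ^ 2] i j)
      ∧ (Matrix.diagonal ![1 - I3/I1, 1 - I3/I2, 2 * M0 ^ 2]).PosDef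
      ∧ ∃ U ∈ nhds xe, ∀ x ∈ U, x ≠ xe → L xe < L x := by
  have h1pos : (0:ℝ) < I1 := by linarith
  have h2pos : (0:ℝ) < I2 := by linarith
  have h1 : I1 ≠ 0 := ne_of_gt h1pos
  have h2 : I2 ≠ 0 := ne_of_gt h2pos
  have h3' : I3 ≠ 0 := ne_of_gt h3
  intro L hL xe hxe
  subst hL
  have hxe0 : xe 0 = 0 := by rw [hxe]; simp
  have hxe1 : xe 1 = 0 := by rw [hxe]; simp
  have hxe2 : xe 2 = M0 := by rw [hxe]; simp
  have hnxe : ‖xe‖^2 = M0^2 := by rw [normsq3, hxe0, hxe1, hxe2]; ring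
  set L : E3 → ℝ := fun x => ((1/2) * ‖x‖ ^ 2 - M0 ^ 2 / 2) ^ 2 + (1/2) * ‖x‖ ^ 2
          - (I3/2) * ((x 0) ^ 2 / I1 + (x 1) ^ 2 / I2 + (x 2) ^ 2 / I3) with hLdef
  -- Part 1
  have part1 : L xe = 0 := by
    rw [hLdef]
    simp only
    rw [hnxe, hxe0, hxe1, hxe2]
    field_simp
    ring
  refine ⟨part1, ?_, ?_, ?_, ?_⟩
  · -- gradient
    have h0 : fderiv ℝ L xe = 0 := by
      rw [(hasD3 I1 I2 I3 M0 h1 h2 h3' xe).fderiv]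
      ext v
      simp [PiLp.proj_apply, PiLp.inner_apply, Fin.sum_univ_three, hxe0, hxe1, hxe2, hnxe]
      ring
    rw [gradient, h0, map_zero]
  · -- Hessian entries
    have hn2 : ContDiff ℝ 2 (fun y : E3 => ‖y‖^2) := contDiff_norm_sq ℝ
    have hpi : ∀ i : Fin 3, ContDiff ℝ 2 (fun y : E3 => y i) :=
      fun i => (EuclideanSpace.proj i : E3 →L[ℝ] ℝ).contDiff
    have hC : ContDiff ℝ 2 L := by
      rw [hLdef]
      exact ((((contDiff_const.mul hn2).sub contDiff_const).pow 2).add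
          (contDiff_const.mul hn2)).sub
        (contDiff_const.mul ((((hpi 0).pow 2).div_const I1).add
          (((hpi 1).pow 2).div_const I2) |>.add (((hpi 2).pow 2).div_const I3)))
    have hdiffD : DifferentiableAt ℝ (fderiv ℝ L) xe :=
      ((hC.fderiv_right (m := 1) (by norm_num)).differentiable (by norm_num)).differentiableAt
    have hswap : ∀ i j : Fin 3,
        fderiv ℝ (fderiv ℝ L) xe (EuclideanSpace.single i 1) (EuclideanSpace.single j 1)
          = fderiv ℝ (fun y => fderiv ℝ L y (EuclideanSpace.single j 1)) xe
              (EuclideanSpace.single i 1) := by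
      intro i j
      rw [fderiv_clm_apply hdiffD (differentiableAt_const _)]
      simp
    have hfun : ∀ j : Fin 3, (fun y : E3 => fderiv ℝ L y (EuclideanSpace.single j 1))
        = fun y : E3 => (‖y‖^2 - M0^2) * y j + (1 - ![I3/I1, I3/I2, (1:ℝ)] j) * y j := by
      intro j
      funext y
      rw [hLdef, (hasD3 I1 I2 I3 M0 h1 h2 h3' y).fderiv]
      fin_cases j <;>
        simp [PiLp.proj_apply, EuclideanSpace.inner_single_right,
          EuclideanSpace.single_apply] <;> ring
    have hkey : ∀ j : Fin 3, HasFDerivAt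
        (fun y : E3 => (‖y‖^2 - M0^2) * y j + (1 - ![I3/I1, I3/I2, (1:ℝ)] j) * y j)
        (((‖xe‖^2 - M0^2) • (EuclideanSpace.proj j : E3 →L[ℝ] ℝ)
            + (xe j) • ((2:ℕ) • innerSL ℝ xe))
          + (1 - ![I3/I1, I3/I2, (1:ℝ)] j) • (EuclideanSpace.proj j : E3 →L[ℝ] ℝ)) xe := by
      intro j
      exact (((hasStrictFDerivAt_norm_sq xe).hasFDerivAt.sub_const (M0^2)).mul
        (hp3 j xe)).add ((hp3 j xe).const_mul _)
    intro i j
    rw [iteratedFDeriv_two_apply]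
    simp only [Matrix.cons_val_zero, Matrix.cons_val_one, Matrix.head_cons]
    rw [hswap i j, hfun j, (hkey j).fderiv]
    fin_cases i <;> fin_cases j <;>
      simp [PiLp.proj_apply, EuclideanSpace.inner_single_right,
        EuclideanSpace.single_apply, hnxe, hxe0, hxe1, hxe2, Matrix.diagonal_apply] <;> ring
  · -- PosDef
    apply Matrix.PosDef.diagonal
    intro i
    fin_cases i <;> simp
    · rw [div_lt_one h1pos]; linarith
    · rw [div_lt_one h2pos]; linarith
    · positivity
  · -- strict local min
    refine ⟨Metric.ball xe |M0|, Metric.ball_mem_nhds _ (abs_pos.mpr hM0), ?_⟩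
    intro x hx hne
    rw [part1]
    have hid : L x = ((1/2)*(x 0^2 + x 1^2 + (x 2 - M0)^2) + M0*(x 2 - M0))^2
        + ((1-I3/I1)/2)*(x 0)^2 + ((1-I3/I2)/2)*(x 1)^2 := by
      rw [hLdef]; simp only; rw [normsq3 x]; field_simp; ring
    have hA : 0 < 1 - I3/I1 := by rw [sub_pos, div_lt_one h1pos]; linarith
    have hB : 0 < 1 - I3/I2 := by rw [sub_pos, div_lt_one h2pos]; linarith
    rw [hid]
    by_cases hx0 : x 0 = 0
    · by_cases hx1 : x 1 = 0
      · -- x 2 ≠ M0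
        have hw : x 2 - M0 ≠ 0 := by
          intro hcon
          apply hne
          apply PiLp.ext
          intro i
          fin_cases i
          · show x 0 = xe 0; rw [hx0, hxe0]
          · show x 1 = xe 1; rw [hx1, hxe1]
          · show x 2 = xe 2; rw [hxe2]; linarith
        -- bound |x 2 - M0| < |M0|
        have hdist : ‖x - xe‖ < |M0| := by
          rw [← dist_eq_norm]; exact Metric.mem_ball.mp hx
        have hw2 : (x 2 - M0)^2 < M0^2 := by
          have hb : (x 2 - M0)^2 ≤ ‖x - xe‖^2 := by
            rw [normsq3, PiLp.sub_apply, PiLp.sub_apply, PiLp.sub_apply, hxe2]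
            nlinarith [sq_nonneg (x 0 - xe 0), sq_nonneg (x 1 - xe 1)]
          have : ‖x - xe‖^2 < M0^2 := by
            rw [← sq_abs M0]
            exact pow_lt_pow_left₀ hdist (norm_nonneg _) (by norm_num) |>.trans_le le_rfl
          linarith
        have hfac : (1/2)*(x 2 - M0) + M0 ≠ 0 := by
          intro hcon
          have : x 2 - M0 = -2*M0 := by linarith
          rw [this] at hw2; nlinarith [sq_nonneg M0, hM0, sq_pos_of_ne_zero hM0]
        have hterm : ((1/2)*(x 0^2 + x 1^2 + (x 2 - M0)^2) + M0*(x 2 - M0)) ≠ 0 := by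
          rw [hx0, hx1]
          have : (1/2)*((0:ℝ)^2 + 0^2 + (x 2 - M0)^2) + M0*(x 2 - M0)
              = (x 2 - M0) * ((1/2)*(x 2 - M0) + M0) := by ring
          rw [this]
          exact mul_ne_zero hw hfac
        have := sq_pos_of_ne_zero hterm
        nlinarith [sq_nonneg (x 0), sq_nonneg (x 1), mul_nonneg hA.le (sq_nonneg (x 0)),
          mul_nonneg hB.le (sq_nonneg (x 1))]
      · have hv : 0 < (x 1)^2 := by positivity
        nlinarith [sq_nonneg ((1/2)*(x 0^2 + x 1^2 + (x 2 - M0)^2) + M0*(x 2 - M0)),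
          mul_nonneg hA.le (sq_nonneg (x 0)), mul_pos hB hv]
    · have hu : 0 < (x 0)^2 := by positivity
      nlinarith [sq_nonneg ((1/2)*(x 0^2 + x 1^2 + (x 2 - M0)^2) + M0*(x 2 - M0)),
        mul_pos hA hu, mul_nonneg hB.le (sq_nonneg (x 1))]
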